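/- Monotonicity of the Fay–Herriot estimating function: for any fixed vector Y ∈ ℝ^ι, the function f(A) = Yᵀ P(A) Y is antitone (monotonically nonincreasing) on (0, ∞); indeed at every A > 0 it has derivative f′(A) = −Yᵀ P(A)² Y = −‖P(A)·Y‖² ≤ 0. -/
import Mathlib

open Matrix

section Aux

variable {α : Type*} [TopologicalSpace α]

lemma contAt_matrix_entry {l m : Type*} {A : α → Matrix l m ℝ} {x : α}
    (hA : ContinuousAt A x) (i : l) (j : m) : ContinuousAt (fun t => A t i j) x :=
  continuousAt_pi.1 (continuousAt_pi.1 hA i) j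

lemma contAt_matrix_mul {l m n : Type*} [Fintype m] {A : α → Matrix l m ℝ}
    {B : α → Matrix m n ℝ} {x : α} (hA : ContinuousAt A x) (hB : ContinuousAt B x) :
    ContinuousAt (fun t => A t * B t) x := by
  apply continuousAt_pi.2; intro i
  apply continuousAt_pi.2; intro j
  simp only [Matrix.mul_apply]
  exact tendsto_finset_sum _ fun k _ =>
    (contAt_matrix_entry hA i k).mul (contAt_matrix_entry hB k j)

lemma contAt_matrix_inv {n : Type*} [Fintype n] [DecidableEq n] {N : α → Matrix n n ℝ}
    {x : α} (hN : ContinuousAt N x) (h : (N x).det ≠ 0) :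
    ContinuousAt (fun t => (N t)⁻¹) x := by
  have hrw : (fun t => (N t)⁻¹) = fun t => ((N t).det)⁻¹ • (N t).adjugate := by
    funext t; rw [Matrix.inv_def, Ring.inverse_eq_inv]
  rw [hrw]
  have hdet : ContinuousAt (fun t => (N t).det) x :=
    (continuous_id.matrix_det).continuousAt.comp hN
  have hadj : ContinuousAt (fun t => (N t).adjugate) x :=
    (continuous_id.matrix_adjugate).continuousAt.comp hN
  exact (hdet.inv₀ h).smul hadj

lemma contAt_quad {ι : Type*} [Fintype ι] {A : α → Matrix ι ι ℝ} {x : α}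
    (hA : ContinuousAt A x) (Y v : ι → ℝ) :
    ContinuousAt (fun t => Y ⬝ᵥ (A t *ᵥ v)) x := by
  simp only [dotProduct, Matrix.mulVec, dotProduct]
  exact tendsto_finset_sum _ fun i _ =>
    tendsto_const_nhds.mul (tendsto_finset_sum _ fun j _ =>
      (contAt_matrix_entry hA i j).mul tendsto_const_nhds)

end Aux

/-- Monotonicity of the Fay–Herriot estimating function: for fixed `Y ∈ ℝ^ι`, the
function `f(A) = Yᵀ P(A) Y` is antitone on `(0, ∞)`; indeed at every `A > 0` it has
derivative `f′(A) = −Yᵀ P(A)² Y = −‖P(A)·Y‖² ≤ 0`. -/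
theorem fay_herriot_estimating_function_antitone
    {ι : Type*} [Fintype ι] [DecidableEq ι] {p : ℕ}
    (Dv : ι → ℝ) (hDv : ∀ j, 0 < Dv j)
    (X : Matrix ι (Fin p) ℝ)
    (Sg : ℝ → Matrix ι ι ℝ)
    (hSg : ∀ A : ℝ, Sg A = Matrix.diagonal fun j => A + Dv j)
    (hX_unit : ∀ A : ℝ, 0 < A → IsUnit (Xᵀ * (Sg A)⁻¹ * X))
    (P : ℝ → Matrix ι ι ℝ)
    (hP : ∀ A : ℝ,
      P A = (Sg A)⁻¹ - (Sg A)⁻¹ * X * (Xᵀ * (Sg A)⁻¹ * X)⁻¹ * Xᵀ * (Sg A)⁻¹)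
    (Y : ι → ℝ) :
    AntitoneOn (fun A => Y ⬝ᵥ (P A *ᵥ Y)) (Set.Ioi (0 : ℝ)) ∧
      ∀ A : ℝ, 0 < A →
        HasDerivAt (fun t => Y ⬝ᵥ (P t *ᵥ Y)) (-(Y ⬝ᵥ ((P A * P A) *ᵥ Y))) A ∧
          Y ⬝ᵥ ((P A * P A) *ᵥ Y) = (P A *ᵥ Y) ⬝ᵥ (P A *ᵥ Y) ∧
          -(Y ⬝ᵥ ((P A * P A) *ᵥ Y)) ≤ 0 := by
  -- basic invertibility facts
  have hSdet : ∀ A : ℝ, 0 < A → (Sg A).det ≠ 0 := by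
    intro A hA
    rw [hSg, Matrix.det_diagonal]
    exact ne_of_gt (Finset.prod_pos fun j _ => add_pos hA (hDv j))
  have hSunit : ∀ A : ℝ, 0 < A → IsUnit (Sg A).det := fun A hA =>
    isUnit_iff_ne_zero.2 (hSdet A hA)
  have hMdet : ∀ A : ℝ, 0 < A → IsUnit (Xᵀ * (Sg A)⁻¹ * X).det := fun A hA =>
    (Matrix.isUnit_iff_isUnit_det _).1 (hX_unit A hA)
  -- P A * X = 0
  have hPX : ∀ A : ℝ, 0 < A → P A * X = 0 := by
    intro A hA
    have h1 := Matrix.nonsing_inv_mul _ (hMdet A hA)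
    rw [hP A, Matrix.sub_mul, sub_eq_zero]
    simp only [Matrix.mul_assoc] at h1 ⊢
    rw [h1, Matrix.mul_one]
  -- Xᵀ * P A = 0
  have hXP : ∀ A : ℝ, 0 < A → Xᵀ * P A = 0 := by
    intro A hA
    have h1 := Matrix.mul_nonsing_inv _ (hMdet A hA)
    rw [hP A, Matrix.mul_sub, sub_eq_zero]
    refine Eq.symm ?_
    calc Xᵀ * ((Sg A)⁻¹ * X * (Xᵀ * (Sg A)⁻¹ * X)⁻¹ * Xᵀ * (Sg A)⁻¹)
        = (Xᵀ * (Sg A)⁻¹ * X) * (Xᵀ * (Sg A)⁻¹ * X)⁻¹ * (Xᵀ * (Sg A)⁻¹) := by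
          simp only [Matrix.mul_assoc]
      _ = Xᵀ * (Sg A)⁻¹ := by rw [h1, Matrix.one_mul]
  -- Sg A * P A
  have hSP : ∀ A : ℝ, 0 < A →
      Sg A * P A = 1 - X * (Xᵀ * (Sg A)⁻¹ * X)⁻¹ * Xᵀ * (Sg A)⁻¹ := by
    intro A hA
    have h1 := Matrix.mul_nonsing_inv _ (hSunit A hA)
    rw [hP A, Matrix.mul_sub]
    congr 1
    calc Sg A * ((Sg A)⁻¹ * X * (Xᵀ * (Sg A)⁻¹ * X)⁻¹ * Xᵀ * (Sg A)⁻¹)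
        = (Sg A * (Sg A)⁻¹) * (X * (Xᵀ * (Sg A)⁻¹ * X)⁻¹ * Xᵀ * (Sg A)⁻¹) := by
          simp only [Matrix.mul_assoc]
      _ = X * (Xᵀ * (Sg A)⁻¹ * X)⁻¹ * Xᵀ * (Sg A)⁻¹ := by
          rw [h1, Matrix.one_mul]
  -- P A * Sg A
  have hPS : ∀ A : ℝ, 0 < A →
      P A * Sg A = 1 - (Sg A)⁻¹ * X * (Xᵀ * (Sg A)⁻¹ * X)⁻¹ * Xᵀ := by
    intro A hA
    have h1 := Matrix.nonsing_inv_mul _ (hSunit A hA)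
    rw [hP A, Matrix.sub_mul, h1]
    congr 1
    calc (Sg A)⁻¹ * X * (Xᵀ * (Sg A)⁻¹ * X)⁻¹ * Xᵀ * (Sg A)⁻¹ * Sg A
        = (Sg A)⁻¹ * X * (Xᵀ * (Sg A)⁻¹ * X)⁻¹ * Xᵀ * ((Sg A)⁻¹ * Sg A) := by
          simp only [Matrix.mul_assoc]
      _ = (Sg A)⁻¹ * X * (Xᵀ * (Sg A)⁻¹ * X)⁻¹ * Xᵀ := by
          rw [h1, Matrix.mul_one]
  -- the key resolvent identity
  have key : ∀ s t : ℝ, 0 < s → 0 < t → P s = P t + (t - s) • (P s * P t) := by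
    intro s t hs ht
    have e1 : P s * (Sg t * P t) = P s := by
      rw [hSP t ht, Matrix.mul_sub, Matrix.mul_one]
      simp only [← Matrix.mul_assoc]
      rw [hPX s hs]
      simp
    have e2 : P s * Sg s * P t = P t := by
      rw [hPS s hs, Matrix.sub_mul, Matrix.one_mul]
      simp only [Matrix.mul_assoc]
      rw [hXP t ht]
      simp
    have eS : Sg t = Sg s + (t - s) • 1 := by
      rw [hSg, hSg]
      ext i j
      by_cases h : i = j <;>
        simp [Matrix.diagonal_apply, Matrix.one_apply, h] <;> ring
    calc P s = P s * Sg t * P t := by rw [Matrix.mul_assoc, e1]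
      _ = P s * (Sg s + (t - s) • 1) * P t := by rw [← eS]
      _ = P s * Sg s * P t + (t - s) • (P s * P t) := by
          rw [Matrix.mul_add, Matrix.add_mul]
          congr 1
          rw [mul_smul_comm, smul_mul_assoc, Matrix.mul_one]
      _ = P t + (t - s) • (P s * P t) := by rw [e2]
  -- symmetry of P
  have hSsym : ∀ A : ℝ, (Sg A)ᵀ = Sg A := by
    intro A; rw [hSg]; exact Matrix.diagonal_transpose _
  have hPsym : ∀ A : ℝ, (P A)ᵀ = P A := by
    intro A
    rw [hP]
    simp only [Matrix.transpose_sub, Matrix.transpose_mul, Matrix.transpose_nonsing_inv,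
      Matrix.transpose_transpose, hSsym, Matrix.mul_assoc]
  -- quadratic form identity
  have hquad : ∀ A : ℝ, Y ⬝ᵥ ((P A * P A) *ᵥ Y) = (P A *ᵥ Y) ⬝ᵥ (P A *ᵥ Y) := by
    intro A
    rw [← Matrix.mulVec_mulVec, Matrix.dotProduct_mulVec, ← Matrix.mulVec_transpose,
      hPsym A]
  have hnn : ∀ w : ι → ℝ, 0 ≤ w ⬝ᵥ w := fun w =>
    Finset.sum_nonneg fun i _ => mul_self_nonneg _
  -- continuity of P
  have cS : Continuous Sg := by
    have hrw : Sg = fun t => Matrix.diagonal fun j => t + Dv j := funext hSg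
    rw [hrw]
    apply continuous_matrix
    intro i j
    by_cases h : i = j <;> simp only [Matrix.diagonal_apply, h, if_pos, if_neg,
      if_true, if_false]
    · exact continuous_id.add continuous_const
    · exact continuous_const
  have cP : ∀ A : ℝ, 0 < A → ContinuousAt P A := by
    intro A hA
    have h1 : ContinuousAt (fun t => (Sg t)⁻¹) A :=
      contAt_matrix_inv cS.continuousAt (hSdet A hA)
    have cM : ContinuousAt (fun t => Xᵀ * (Sg t)⁻¹ * X) A :=
      contAt_matrix_mul (contAt_matrix_mul continuousAt_const h1) continuousAt_const
    have h2 : ContinuousAt (fun t => (Xᵀ * (Sg t)⁻¹ * X)⁻¹) A :=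
      contAt_matrix_inv cM ((hMdet A hA).ne_zero)
    have h3 : ContinuousAt
        (fun t => (Sg t)⁻¹ - (Sg t)⁻¹ * X * (Xᵀ * (Sg t)⁻¹ * X)⁻¹ * Xᵀ * (Sg t)⁻¹) A :=
      h1.sub (contAt_matrix_mul (contAt_matrix_mul (contAt_matrix_mul
        (contAt_matrix_mul h1 continuousAt_const) h2) continuousAt_const) h1)
    have hrw : P = fun t =>
        (Sg t)⁻¹ - (Sg t)⁻¹ * X * (Xᵀ * (Sg t)⁻¹ * X)⁻¹ * Xᵀ * (Sg t)⁻¹ := funext hP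
    rw [hrw]
    exact h3
  -- the derivative
  have hderiv : ∀ A : ℝ, 0 < A →
      HasDerivAt (fun t => Y ⬝ᵥ (P t *ᵥ Y)) (-(Y ⬝ᵥ ((P A * P A) *ᵥ Y))) A := by
    intro A hA
    rw [hasDerivAt_iff_tendsto_slope]
    have hmem : Set.Ioi (0 : ℝ) ∈ nhdsWithin A {A}ᶜ :=
      nhdsWithin_le_nhds (Ioi_mem_nhds hA)
    have heq : ∀ᶠ t in nhdsWithin A {A}ᶜ,
        (fun t => -(Y ⬝ᵥ ((P t * P A) *ᵥ Y))) t
          = slope (fun t => Y ⬝ᵥ (P t *ᵥ Y)) A t := by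
      filter_upwards [hmem, self_mem_nhdsWithin] with t ht hne
      have hne' : t ≠ A := hne
      have hk := key t A ht hA
      have hft : Y ⬝ᵥ (P t *ᵥ Y) - Y ⬝ᵥ (P A *ᵥ Y)
          = (A - t) * (Y ⬝ᵥ ((P t * P A) *ᵥ Y)) := by
        conv_lhs => rw [hk]
        simp only [Matrix.add_mulVec, Matrix.smul_mulVec, dotProduct_add,
          dotProduct_smul, smul_eq_mul]
        ring
      rw [slope_def_field, hft]
      field_simp [sub_ne_zero.2 hne']
      ring
    refine Filter.Tendsto.congr' heq ?_
    have hc : ContinuousAt (fun t => -(Y ⬝ᵥ ((P t * P A) *ᵥ Y))) A := by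
      have hrw : (fun t => -(Y ⬝ᵥ ((P t * P A) *ᵥ Y)))
          = fun t => -(Y ⬝ᵥ (P t *ᵥ (P A *ᵥ Y))) := by
        funext t; rw [Matrix.mulVec_mulVec]
      rw [hrw]
      exact (contAt_quad (cP A hA) Y (P A *ᵥ Y)).neg
    have := hc.tendsto.mono_left (nhdsWithin_le_nhds (s := {A}ᶜ))
    simpa [Matrix.mulVec_mulVec] using this
  -- assemble
  refine ⟨?_, fun A hA => ⟨hderiv A hA, hquad A, ?_⟩⟩
  · apply antitoneOn_of_deriv_nonpos (convex_Ioi 0)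
    · exact fun x hx => ((contAt_quad (cP x hx) Y Y)).continuousWithinAt
    · rw [interior_Ioi]
      exact fun x hx => (hderiv x hx).differentiableAt.differentiableWithinAt
    · rw [interior_Ioi]
      intro x hx
      rw [(hderiv x hx).deriv]
      rw [hquad x]
      exact neg_nonpos.2 (hnn _)
  · rw [hquad A]
    exact neg_nonpos.2 (hnn _)
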